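/- In the minimum cost spanning tree game on three players with supplier 0 and edge weights w(0,1)=0, w(0,2)=2k, w(0,3)=2k, w(1,2)=0, w(1,3)=0, w(2,3)=0 (k > 0), the unique allocation maximizing x(N) over the almost core is x = (-k, k, k); in particular every optimal almost core allocation has a strictly negative component. -/
import Mathlib


open Finset

lemma proper_sub3 (S : Finset (Fin 3)) (hS : S ⊂ univ) :
    S = ∅ ∨ S = {0} ∨ S = {1} ∨ S = {2} ∨ S = {0,1} ∨ S = {0,2} ∨ S = {1,2} := by
  have h := hS.subset
  have hne : S ≠ univ := hS.ne
  fin_cases S <;> revert hne <;> decide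

/-- In the 3-player MST game with c({1})=0, c({2})=2k, c({3})=2k, c({1,2})=0,
c({1,3})=0, c({2,3})=2k (players 1,2,3 as Fin 3 indices 0,1,2; k>0), the unique allocation
maximizing x(N) over the almost core is x = (-k,k,k); in particular every optimal almost
core allocation has a strictly negative component. -/
theorem mst_subsidy_necessary (k : ℝ) (hk : 0 < k) (c : Finset (Fin 3) → ℝ)
    (h0 : c ∅ = 0)
    (h1 : c {0} = 0) (h2 : c {1} = 2 * k) (h3 : c {2} = 2 * k)
    (h12 : c {0, 1} = 0) (h13 : c {0, 2} = 0) (h23 : c {1, 2} = 2 * k)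
    (x : Fin 3 → ℝ) (hx : x = ![-k, k, k]) :
    (∀ S : Finset (Fin 3), S ⊂ univ → ∑ i ∈ S, x i ≤ c S) ∧
    (∀ y : Fin 3 → ℝ, (∀ S : Finset (Fin 3), S ⊂ univ → ∑ i ∈ S, y i ≤ c S) →
      ∑ i, y i ≤ ∑ i, x i) ∧
    (∀ y : Fin 3 → ℝ, (∀ S : Finset (Fin 3), S ⊂ univ → ∑ i ∈ S, y i ≤ c S) →
      ∑ i, y i = ∑ i, x i → y = x) ∧
    x 0 < 0 := by
  subst hx
  have hsum : ∑ i, (![-k, k, k] : Fin 3 → ℝ) i = k := by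
    simp [Fin.sum_univ_three]
  have key : ∀ y : Fin 3 → ℝ, (∀ S : Finset (Fin 3), S ⊂ univ → ∑ i ∈ S, y i ≤ c S) →
      y 0 + y 1 ≤ 0 ∧ y 0 + y 2 ≤ 0 ∧ y 1 + y 2 ≤ 2 * k := by
    intro y hy
    have a := hy {0,1} (by decide)
    have b := hy {0,2} (by decide)
    have d := hy {1,2} (by decide)
    simp [Finset.sum_insert, Finset.sum_singleton] at a b d
    rw [h12] at a; rw [h13] at b; rw [h23] at d
    exact ⟨a, b, d⟩
  refine ⟨?_, ?_, ?_, by simpa using hk⟩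
  · intro S hS
    rcases proper_sub3 S hS with h | h | h | h | h | h | h <;>
      subst h <;>
      simp [h0, h1, h2, h3, h12, h13, h23, Finset.sum_insert, Finset.sum_singleton] <;>
      linarith
  · intro y hy
    obtain ⟨a, b, d⟩ := key y hy
    rw [hsum, Fin.sum_univ_three]
    linarith
  · intro y hy hsy
    obtain ⟨a, b, d⟩ := key y hy
    rw [hsum, Fin.sum_univ_three] at hsy
    funext i
    fin_cases i <;> simp <;> linarith
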